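/- Let μ be a locally finite Borel measure on ℝ^d, let 𝒮 be a countable collection of Borel subsets of ℝ^d, let C ≥ 1, and let {λ_S}_{S∈𝒮} be a family of non-negative reals. Then the following two assertions are equivalent: (i) for every subcollection 𝒮′ ⊆ 𝒮 one has ∑_{S∈𝒮′} λ_S ≤ C · μ(⋃_{S∈𝒮′} S); (ii) for every family {a_S}_{S∈𝒮} of non-negative reals, ∑_{S∈𝒮} λ_S a_S ≤ C · ∫ sup_{S∈𝒮} a_S 1_S dμ, where 1_S denotes the indicator function of S and the supremum is taken pointwise. -/

import Mathlib

open MeasureTheory Set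
open scoped NNReal ENNReal

private lemma vol_aux (c : ℝ≥0∞) :
    MeasureTheory.volume {t : ℝ | 0 < t ∧ ENNReal.ofReal t < c} = c := by
  rcases eq_or_ne c ⊤ with rfl | hc
  · have h : {t : ℝ | 0 < t ∧ ENNReal.ofReal t < ⊤} = Ioi 0 := by
      ext t; simp [ENNReal.ofReal_lt_top]
    rw [h, Real.volume_Ioi]
  · have h : {t : ℝ | 0 < t ∧ ENNReal.ofReal t < c} = Ioo 0 c.toReal := by
      ext t
      simp only [mem_Ioo, mem_setOf_eq, and_congr_right_iff]
      intro ht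
      rw [ENNReal.ofReal_lt_iff_lt_toReal ht.le hc]
    rw [h, Real.volume_Ioo, sub_zero, ENNReal.ofReal_toReal hc]

/-- Dual reformulation of the Carleson condition, for a countable
collection of Borel sets: the Carleson condition with constant `C` holds iff
`∑ λ_S a_S ≤ C ∫ sup_S a_S 1_S dμ` for every family of non-negative reals `a`. -/
theorem carleson_iff_dual_estimate {d : ℕ} (μ : Measure (Fin d → ℝ))
    [IsLocallyFiniteMeasure μ]
    {ι : Type*} [Countable ι] (S : ι → Set (Fin d → ℝ)) (hS : ∀ i, MeasurableSet (S i))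
    (C : ℝ≥0) (hC : 1 ≤ C) (lam : ι → ℝ≥0) :
    (∀ T : Set ι, ∑' i : T, (lam i : ℝ≥0∞) ≤ (C : ℝ≥0∞) * μ (⋃ i ∈ T, S i)) ↔
      (∀ a : ι → ℝ≥0, ∑' i, (lam i : ℝ≥0∞) * (a i : ℝ≥0∞) ≤
        (C : ℝ≥0∞) * ∫⁻ x, ⨆ i, (S i).indicator (fun _ => (a i : ℝ≥0∞)) x ∂μ) := by
  classical
  constructor
  · intro h a
    set f : (Fin d → ℝ) → ℝ≥0∞ :=
      fun x => ⨆ i, (S i).indicator (fun _ => (a i : ℝ≥0∞)) x with hfdef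
    have hf : Measurable f := Measurable.iSup fun i => measurable_const.indicator (hS i)
    -- step 1 : write each term as an integral over ℝ
    have h1 : ∀ i, (lam i : ℝ≥0∞) * (a i : ℝ≥0∞)
        = ∫⁻ t : ℝ, (Ioo (0:ℝ) (a i : ℝ)).indicator (fun _ => (lam i : ℝ≥0∞)) t := by
      intro i
      rw [lintegral_indicator_const measurableSet_Ioo, Real.volume_Ioo, sub_zero,
        ENNReal.ofReal_coe_nnreal]
    calc ∑' i, (lam i : ℝ≥0∞) * (a i : ℝ≥0∞)
        = ∫⁻ t : ℝ, ∑' i, (Ioo (0:ℝ) (a i : ℝ)).indicator (fun _ => (lam i : ℝ≥0∞)) t := by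
          simp_rw [h1]
          exact (lintegral_tsum fun i =>
            (measurable_const.indicator measurableSet_Ioo).aemeasurable).symm
      _ ≤ ∫⁻ t : ℝ, (C : ℝ≥0∞) *
            (Ioi (0:ℝ)).indicator (fun t => μ {x | ENNReal.ofReal t < f x}) t := by
          refine lintegral_mono fun t => ?_
          by_cases ht : 0 < t
          · have ht' : ∀ i, (Ioo (0:ℝ) (a i : ℝ)).indicator (fun _ => (lam i : ℝ≥0∞)) t
                = ({i | t < (a i : ℝ)}).indicator (fun i => (lam i : ℝ≥0∞)) i := by
              intro i
              by_cases hi : t < (a i : ℝ) <;> simp [Set.indicator, ht, hi]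
            rw [Set.indicator_of_mem (show t ∈ Ioi (0:ℝ) from ht)]
            calc (∑' i, (Ioo (0:ℝ) (a i : ℝ)).indicator (fun _ => (lam i : ℝ≥0∞)) t)
                = ∑' i : {i | t < (a i : ℝ)}, (lam i : ℝ≥0∞) :=
                  (tsum_congr ht').trans (tsum_subtype _ _).symm
              _ ≤ (C : ℝ≥0∞) * μ (⋃ i ∈ {i | t < (a i : ℝ)}, S i) := h {i | t < (a i : ℝ)}
              _ ≤ (C : ℝ≥0∞) * μ {x | ENNReal.ofReal t < f x} := by
                  gcongr
                  intro x hx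
                  simp only [mem_iUnion, exists_prop] at hx
                  obtain ⟨i, hi, hxi⟩ := hx
                  have h2 : ENNReal.ofReal t < (a i : ℝ≥0∞) := by
                    rw [← ENNReal.ofReal_coe_nnreal]
                    exact (ENNReal.ofReal_lt_ofReal_iff (lt_trans ht hi)).mpr hi
                  refine lt_of_lt_of_le h2 ?_
                  have h3 := le_iSup (fun j => (S j).indicator (fun _ => (a j : ℝ≥0∞)) x) i
                  rwa [Set.indicator_of_mem hxi] at h3
          · have h0 : ∀ i, (Ioo (0:ℝ) (a i : ℝ)).indicator (fun _ => (lam i : ℝ≥0∞)) t = 0 := by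
              intro i
              exact Set.indicator_of_notMem (fun hmem => ht hmem.1) _
            simp [h0]
      _ = (C : ℝ≥0∞) * ∫⁻ t : ℝ,
            (Ioi (0:ℝ)).indicator (fun t => μ {x | ENNReal.ofReal t < f x}) t :=
          lintegral_const_mul _ <| Measurable.indicator
            (by
              have hA : MeasurableSet {p : ℝ × (Fin d → ℝ) | ENNReal.ofReal p.1 < f p.2} :=
                measurableSet_lt (ENNReal.measurable_ofReal.comp measurable_fst)
                  (hf.comp measurable_snd)
              exact measurable_measure_prodMk_left hA) measurableSet_Ioi
      _ ≤ (C : ℝ≥0∞) * ∫⁻ x, f x ∂μ := by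
          gcongr
          -- Fubini argument
          set A : Set (ℝ × (Fin d → ℝ)) := {p | 0 < p.1 ∧ ENNReal.ofReal p.1 < f p.2} with hA
          have hAm : MeasurableSet A := by
            have h1' : MeasurableSet {p : ℝ × (Fin d → ℝ) | 0 < p.1} :=
              measurable_fst measurableSet_Ioi
            have h2' : MeasurableSet {p : ℝ × (Fin d → ℝ) | ENNReal.ofReal p.1 < f p.2} :=
              measurableSet_lt (ENNReal.measurable_ofReal.comp measurable_fst)
                (hf.comp measurable_snd)
            exact h1'.inter h2'
          have key : (∫⁻ t : ℝ,
              (Ioi (0:ℝ)).indicator (fun t => μ {x | ENNReal.ofReal t < f x}) t)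
              = ∫⁻ t : ℝ, ∫⁻ x, A.indicator (fun _ => (1:ℝ≥0∞)) (t, x) ∂μ := by
            refine lintegral_congr fun t => ?_
            by_cases ht : 0 < t
            · rw [Set.indicator_of_mem (show t ∈ Ioi (0:ℝ) from ht)]
              have heq : ∀ x, A.indicator (fun _ => (1:ℝ≥0∞)) (t, x)
                  = ({x | ENNReal.ofReal t < f x}).indicator (fun _ => (1:ℝ≥0∞)) x := by
                intro x
                by_cases hx : ENNReal.ofReal t < f x <;> simp [hA, Set.indicator, ht, hx]
              simp_rw [heq]
              rw [lintegral_indicator_const (measurableSet_lt measurable_const hf), one_mul]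
            · rw [Set.indicator_of_notMem (show t ∉ Ioi (0:ℝ) from ht)]
              have heq : ∀ x, A.indicator (fun _ => (1:ℝ≥0∞)) (t, x) = 0 := by
                intro x
                exact Set.indicator_of_notMem (fun hmem => ht hmem.1) _
              simp [heq]
          rw [key]
          have hunc : AEMeasurable
              (Function.uncurry fun (t : ℝ) (x : Fin d → ℝ) =>
                A.indicator (fun _ => (1:ℝ≥0∞)) (t, x))
              ((volume : Measure ℝ).prod μ) := by
            have : Measurable fun p : ℝ × (Fin d → ℝ) =>
                A.indicator (fun _ => (1:ℝ≥0∞)) p := measurable_const.indicator hAm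
            exact this.aemeasurable
          rw [lintegral_lintegral_swap hunc]
          refine le_of_eq (lintegral_congr fun x => ?_)
          have heq : ∀ t : ℝ, A.indicator (fun _ => (1:ℝ≥0∞)) (t, x)
              = ({t : ℝ | 0 < t ∧ ENNReal.ofReal t < f x}).indicator (fun _ => (1:ℝ≥0∞)) t := by
            intro t
            by_cases htx : 0 < t ∧ ENNReal.ofReal t < f x <;> simp [hA, Set.indicator, htx]
          simp_rw [heq]
          have hset : MeasurableSet {t : ℝ | 0 < t ∧ ENNReal.ofReal t < f x} := by
            have hrw : {t : ℝ | 0 < t ∧ ENNReal.ofReal t < f x}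
                = Ioi 0 ∩ ENNReal.ofReal ⁻¹' Iio (f x) := rfl
            rw [hrw]
            exact measurableSet_Ioi.inter (ENNReal.measurable_ofReal measurableSet_Iio)
          rw [lintegral_indicator_const hset, one_mul, vol_aux]
  · intro h T
    set a : ι → ℝ≥0 := fun i => if i ∈ T then 1 else 0 with ha
    have key := h a
    have hL : (∑' i, (lam i : ℝ≥0∞) * (a i : ℝ≥0∞)) = ∑' i : T, (lam i : ℝ≥0∞) := by
      have heq : ∀ i, (lam i : ℝ≥0∞) * (a i : ℝ≥0∞)
          = T.indicator (fun i => (lam i : ℝ≥0∞)) i := by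
        intro i; by_cases hi : i ∈ T <;> simp [ha, Set.indicator, hi]
      rw [tsum_congr heq, ← tsum_subtype]
    have hU : MeasurableSet (⋃ i ∈ T, S i) :=
      MeasurableSet.biUnion T.to_countable fun i _ => hS i
    have hR : (∫⁻ x, ⨆ i, (S i).indicator (fun _ => (a i : ℝ≥0∞)) x ∂μ)
        = μ (⋃ i ∈ T, S i) := by
      have hmu : μ (⋃ i ∈ T, S i)
          = ∫⁻ x, (⋃ i ∈ T, S i).indicator (fun _ => (1:ℝ≥0∞)) x ∂μ := by
        rw [lintegral_indicator_const hU, one_mul]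
      rw [hmu]
      refine lintegral_congr fun x => ?_
      by_cases hx : x ∈ ⋃ i ∈ T, S i
      · rw [Set.indicator_of_mem hx]
        simp only [mem_iUnion, exists_prop] at hx
        obtain ⟨i, hi, hxi⟩ := hx
        refine le_antisymm (iSup_le fun j => ?_) ?_
        · by_cases hxj : x ∈ S j
          · rw [Set.indicator_of_mem hxj]
            by_cases hj : j ∈ T <;> simp [ha, hj]
          · rw [Set.indicator_of_notMem hxj]; exact zero_le
        · have h3 := le_iSup (fun j => (S j).indicator (fun _ => (a j : ℝ≥0∞)) x) i
          rw [Set.indicator_of_mem hxi] at h3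
          simpa [ha, hi] using h3
      · rw [Set.indicator_of_notMem hx]
        simp only [mem_iUnion, exists_prop, not_exists, not_and] at hx
        refine le_antisymm (iSup_le fun j => ?_) zero_le
        by_cases hj : j ∈ T
        · exact le_of_eq (Set.indicator_of_notMem (hx j hj) _)
        · simp [ha, hj]
    rw [hL, hR] at key
    exact key
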